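/- Let p : V(K_{5,5}) → ℂ^3 be a regular point of the measurement map m_{3,K_{5,5}}, i.e., a configuration at which the rigidity matrix R_{K_{5,5}}(p) has rank 24 (the maximal possible rank). Then the space of equilibrium stresses of the framework (K_{5,5}, p), i.e., the left kernel of R_{K_{5,5}}(p), has dimension exactly 1, and every equilibrium stress ω of (K_{5,5}, p) is balanced, meaning the sum of the coordinates of ω over all 25 edges equals 0. -/

import Mathlib

open scoped BigOperators

noncomputable section

/-- Complex squared length (no conjugation). -/
def csq (d : ℕ) (x y : Fin d → ℂ) : ℂ := ∑ k, (x k - y k) ^ 2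

lemma csq_comm (d : ℕ) (x y : Fin d → ℂ) : csq d x y = csq d y x := by
  unfold csq; congr 1; funext k; ring

/-- Squared length of an (unordered) edge under a configuration. -/
def edgeSq {V : Type*} (d : ℕ) (p : V → Fin d → ℂ) : Sym2 V → ℂ :=
  Sym2.lift ⟨fun u v => csq d (p u) (p v), fun u v => csq_comm d (p u) (p v)⟩

/-- The measurement map of a graph: a configuration goes to its vector of
squared edge lengths. -/
def measMap {V : Type*} (G : SimpleGraph V) (d : ℕ) (p : V → Fin d → ℂ) :
    G.edgeSet → ℂ := fun e => edgeSq d p (e : Sym2 V)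

/-- The `d`-dimensional measurement variety of a graph: the Zariski closure
(zero locus of the vanishing ideal) of the image of the measurement map. -/
def measVariety {V : Type*} (G : SimpleGraph V) (d : ℕ) : Set (G.edgeSet → ℂ) :=
  MvPolynomial.zeroLocus ℂ (MvPolynomial.vanishingIdeal ℂ (Set.range (measMap G d)))

/-- Row of the rigidity matrix for the ordered pair (u,v). -/
def rRowFun {V : Type*} [DecidableEq V] (p : V → Fin 3 → ℂ) (u v : V) :
    V → Fin 3 → ℂ :=
  fun w k => if w = u then 2 * (p u k - p v k)
    else if w = v then 2 * (p v k - p u k) else 0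

lemma rRowFun_comm {V : Type*} [DecidableEq V] (p : V → Fin 3 → ℂ) (u v : V) :
    rRowFun p u v = rRowFun p v u := by
  funext w k
  unfold rRowFun
  rcases eq_or_ne w u with h1 | h1 <;> rcases eq_or_ne w v with h2 | h2
  · have huv : u = v := h1.symm.trans h2
    subst huv; simp [h1]
  · have huv : u ≠ v := fun h => h2 (h1.trans h)
    simp [h1, h2, huv, huv.symm]
  · have huv : v ≠ u := fun h => h1 (h2.trans h)
    simp [h1, h2, huv, huv.symm]
  · simp [h1, h2]

/-- Row of the rigidity matrix corresponding to an unordered edge. -/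
def rigidityRow {V : Type*} [DecidableEq V] (p : V → Fin 3 → ℂ) :
    Sym2 V → (V → Fin 3 → ℂ) :=
  Sym2.lift ⟨rRowFun p, rRowFun_comm p⟩

/-- A fintype instance for edge sets over finite vertex types. -/
noncomputable instance edgeSetFintype {V : Type*} [Finite V] (G : SimpleGraph V) :
    Fintype G.edgeSet := Fintype.ofFinite _

noncomputable instance neighborSetFintype' {V : Type*} [Finite V] (G : SimpleGraph V) (v : V) :
    Fintype (G.neighborSet v) := Fintype.ofFinite _

/-- The space of equilibrium stresses of the framework `(G, p)`:
the left kernel of the rigidity matrix. -/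
def stressSpace {V : Type*} [DecidableEq V] [Finite V] (G : SimpleGraph V)
    (p : V → Fin 3 → ℂ) : Submodule ℂ (G.edgeSet → ℂ) where
  carrier := {ω | ∑ e : G.edgeSet, ω e • rigidityRow p (e : Sym2 V) = 0}
  add_mem' := by
    intro a b ha hb
    simp only [Set.mem_setOf_eq] at *
    simp only [Pi.add_apply, add_smul, Finset.sum_add_distrib, ha, hb, add_zero]
  zero_mem' := by simp
  smul_mem' := by
    intro c a ha
    simp only [Set.mem_setOf_eq] at *
    simp only [Pi.smul_apply, smul_eq_mul, mul_smul, ← Finset.smul_sum, ha, smul_zero]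

/-- The span of the rows of the rigidity matrix of `(G,p)`. -/
def rowSpan {V : Type*} [DecidableEq V] (G : SimpleGraph V) (p : V → Fin 3 → ℂ) :
    Submodule ℂ (V → Fin 3 → ℂ) :=
  Submodule.span ℂ (Set.range fun e : G.edgeSet => rigidityRow p (e : Sym2 V))

/-- The rank of the rigidity matrix of `(G,p)`. -/
def rigidityRank {V : Type*} [DecidableEq V] (G : SimpleGraph V) (p : V → Fin 3 → ℂ) : ℕ :=
  Module.finrank ℂ (rowSpan G p)

/-- `G` is a circuit of the 3-dimensional rigidity matroid: its full edge set is
dependent (for every configuration), but every proper subset of its edge set is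
independent (for some configuration). -/
def IsRigidityCircuit {V : Type*} [DecidableEq V] (G : SimpleGraph V) : Prop :=
  (∀ p : V → Fin 3 → ℂ, ¬ LinearIndependent ℂ (fun e : G.edgeSet => rigidityRow p (e : Sym2 V))) ∧
  (∀ S : Set (Sym2 V), S ⊆ G.edgeSet → S ≠ G.edgeSet →
    ∃ p : V → Fin 3 → ℂ, LinearIndependent ℂ (fun e : S => rigidityRow p (e : Sym2 V)))

/-- `G` is generically rigid in 3 dimensions. -/
def IsThreeRigid {V : Type*} [DecidableEq V] [Fintype V] (G : SimpleGraph V) : Prop :=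
  ∃ p : V → Fin 3 → ℂ, rigidityRank G p = 3 * Fintype.card V - 6

/-- The complete bipartite graph `K_{5,5}`. -/
def K55 : SimpleGraph (Fin 5 ⊕ Fin 5) := completeBipartiteGraph (Fin 5) (Fin 5)

/-- A vector is balanced if its coordinates sum to zero. -/
def IsBalanced {E : Type*} [Fintype E] (ω : E → ℂ) : Prop := ∑ e, ω e = 0

/-- The Zariski tangent space to a subset `W ⊆ ℂ^E` at a point `x`:
vectors annihilated by the differentials at `x` of all polynomials in the
vanishing ideal of `W`. -/
def zTangent {E : Type*} [Fintype E] (W : Set (E → ℂ)) (x : E → ℂ) :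
    Submodule ℂ (E → ℂ) where
  carrier := {v | ∀ f ∈ MvPolynomial.vanishingIdeal ℂ W,
    ∑ e, v e * MvPolynomial.eval x (MvPolynomial.pderiv e f) = 0}
  add_mem' := by
    intro a b ha hb
    simp only [Set.mem_setOf_eq] at *
    intro f hf
    simp only [Pi.add_apply, add_mul, Finset.sum_add_distrib, ha f hf, hb f hf, add_zero]
  zero_mem' := by simp
  smul_mem' := by
    intro c a ha
    simp only [Set.mem_setOf_eq] at *
    intro f hf
    simp only [Pi.smul_apply, smul_eq_mul, mul_assoc, ← Finset.mul_sum, ha f hf, mul_zero]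

/-- Krull dimension of (the Zariski closure of) a subset of `ℂ^E`, as the Krull
dimension of its coordinate ring. -/
def varietyDim {E : Type*} (W : Set (E → ℂ)) : WithBot (WithTop ℕ) :=
  ringKrullDim (MvPolynomial E ℂ ⧸ MvPolynomial.vanishingIdeal ℂ W)

/-- `x` is a smooth point of `W` if it lies on `W` and its Zariski tangent space
has dimension equal to the Krull dimension of `W`. -/
def IsSmoothPoint {E : Type*} [Fintype E] (W : Set (E → ℂ)) (x : E → ℂ) : Prop :=
  x ∈ W ∧ (Module.finrank ℂ (zTangent W x) : WithBot (WithTop ℕ)) = varietyDim W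

/-- `ω` is a normal vector to `W` at `x`. -/
def IsNormalAt {E : Type*} [Fintype E] (W : Set (E → ℂ)) (x : E → ℂ) (ω : E → ℂ) : Prop :=
  ∀ v ∈ zTangent W x, ∑ e, ω e * v e = 0

/-- The set `S(G)` of smooth points of a measurement variety. -/
def smoothLocus {E : Type*} [Fintype E] (W : Set (E → ℂ)) : Set (E → ℂ) :=
  {x | IsSmoothPoint W x}

/-- The set `B(G)` of smooth points all of whose normal vectors are balanced. -/
def balancedLocus {E : Type*} [Fintype E] (W : Set (E → ℂ)) : Set (E → ℂ) :=
  {x | IsSmoothPoint W x ∧ ∀ ω : E → ℂ, IsNormalAt W x ω → IsBalanced ω}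



/-- Auxiliary: any 5 points in `ℂ³` admit a nontrivial affine dependency. -/
lemma exists_dep (q : Fin 5 → Fin 3 → ℂ) :
    ∃ lam : Fin 5 → ℂ, (∑ i, lam i = 0) ∧ (∀ k, ∑ i, lam i * q i k = 0) ∧ ∃ i, lam i ≠ 0 := by
  set v : Fin 5 → ((Fin 3 → ℂ) × ℂ) := fun i => (q i, 1) with hv
  have hni : ¬ LinearIndependent ℂ v := by
    intro h
    have hc := h.fintype_card_le_finrank
    have h4 : Module.finrank ℂ ((Fin 3 → ℂ) × ℂ) = 4 := by
      simp [Module.finrank_prod]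
    rw [h4, Fintype.card_fin] at hc
    omega
  obtain ⟨g, hg, i, hi⟩ := Fintype.not_linearIndependent_iff.mp hni
  refine ⟨g, ?_, ?_, ⟨i, hi⟩⟩
  · have := congrArg Prod.snd hg
    simpa [Prod.snd_sum, hv] using this
  · intro k
    have := congrArg (fun x : (Fin 3 → ℂ) × ℂ => x.1 k) hg
    simpa [Prod.fst_sum, hv, Finset.sum_apply] using this

lemma K55_adj (u j : Fin 5) : K55.Adj (Sum.inl u) (Sum.inr j) := by
  simp [K55]

/-- Edges of `K₅,₅` are indexed by pairs. -/
def edgeEquiv : (Fin 5 × Fin 5) ≃ K55.edgeSet :=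
  Equiv.ofBijective
    (fun x => ⟨s(Sum.inl x.1, Sum.inr x.2), (SimpleGraph.mem_edgeSet K55).2 (K55_adj x.1 x.2)⟩)
    (by
      constructor
      · rintro ⟨u, j⟩ ⟨u', j'⟩ h
        simp only [Subtype.mk.injEq, Sym2.eq_iff] at h
        rcases h with ⟨h1, h2⟩ | ⟨h1, h2⟩
        · simp_all
        · exact absurd h1 (by simp)
      · rintro ⟨e, he⟩
        induction e using Sym2.ind with
        | _ x y =>
          rw [SimpleGraph.mem_edgeSet] at he
          rcases x with u | u <;> rcases y with w | w
          · simp [K55] at he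
          · exact ⟨(u, w), rfl⟩
          · exact ⟨(w, u), Subtype.ext (Sym2.eq_swap)⟩
          · simp [K55] at he)

lemma card_K55_edgeSet : Fintype.card K55.edgeSet = 25 := by
  rw [← Fintype.card_congr edgeEquiv]
  simp

/-- At a regular point of the measurement map of `K_{5,5}` (rank of the
rigidity matrix equal to 24), the space of equilibrium stresses is
one-dimensional and every equilibrium stress is balanced. -/
theorem K55_unique_balanced_stress (p : (Fin 5 ⊕ Fin 5) → Fin 3 → ℂ)
    (hreg : rigidityRank K55 p = 24) :
    Module.finrank ℂ (stressSpace K55 p) = 1 ∧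
      ∀ ω ∈ stressSpace K55 p, IsBalanced ω := by
  classical
  set T : (K55.edgeSet → ℂ) →ₗ[ℂ] ((Fin 5 ⊕ Fin 5) → Fin 3 → ℂ) :=
    Fintype.linearCombination ℂ (fun e : K55.edgeSet => rigidityRow p (e : Sym2 _)) with hT
  have hker : stressSpace K55 p = LinearMap.ker T := by
    ext ω
    constructor
    · intro hω; exact hω
    · intro hω; exact hω
  have hrange : LinearMap.range T = rowSpan K55 p := by
    rw [hT, Fintype.range_linearCombination]; rfl
  have hrank : Module.finrank ℂ (LinearMap.range T) = 24 := by
    rw [hrange]; exact hreg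
  have hdom : Module.finrank ℂ (K55.edgeSet → ℂ) = 25 := by
    rw [Module.finrank_fintype_fun_eq_card, card_K55_edgeSet]
  have hnull := T.finrank_range_add_finrank_ker
  have hdim : Module.finrank ℂ (stressSpace K55 p) = 1 := by
    rw [hker]; omega
  refine ⟨hdim, ?_⟩
  -- explicit balanced stress
  obtain ⟨lam, hlam0, hlam, i0, hi0⟩ := exists_dep (fun u => p (Sum.inl u))
  obtain ⟨mu, hmu0, hmu, j0, hj0⟩ := exists_dep (fun j => p (Sum.inr j))
  set h : (Fin 5 ⊕ Fin 5) → ℂ := Sum.elim lam mu with hh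
  set ω₀ : K55.edgeSet → ℂ :=
    fun e => Sym2.lift ⟨fun x y => h x * h y, fun x y => mul_comm _ _⟩ (e : Sym2 _) with hω₀
  have hω₀apply : ∀ u j : Fin 5, ω₀ (edgeEquiv (u, j)) = lam u * mu j := by
    intro u j
    rfl
  have hmem : ω₀ ∈ stressSpace K55 p := by
    show ∑ e : K55.edgeSet, ω₀ e • rigidityRow p (e : Sym2 _) = 0
    rw [← Equiv.sum_comp edgeEquiv
      (fun e : K55.edgeSet => ω₀ e • rigidityRow p (e : Sym2 _))]
    funext w k
    simp only [Finset.sum_apply, Pi.smul_apply, smul_eq_mul, Pi.zero_apply]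
    have hcoe : ∀ x : Fin 5 × Fin 5,
        ((edgeEquiv x : K55.edgeSet) : Sym2 (Fin 5 ⊕ Fin 5)) = s(Sum.inl x.1, Sum.inr x.2) :=
      fun x => rfl
    simp only [hcoe, hω₀apply, rigidityRow, Sym2.lift_mk, rRowFun]
    rw [Fintype.sum_prod_type]
    rcases w with u₀ | j₀
    · simp only [Sum.inl.injEq, reduceCtorEq, if_false]
      rw [Fintype.sum_eq_single u₀ (fun b hb => Finset.sum_eq_zero (fun j _ => by
        simp [Ne.symm hb]))]
      simp only [if_true, if_pos rfl]
      have hre : ∀ j : Fin 5, lam u₀ * mu j * (2 * (p (Sum.inl u₀) k - p (Sum.inr j) k)) =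
          (lam u₀ * (2 * p (Sum.inl u₀) k)) * mu j -
            (lam u₀ * 2) * (mu j * p (Sum.inr j) k) := fun j => by ring
      rw [Finset.sum_congr rfl (fun j _ => hre j), Finset.sum_sub_distrib,
        ← Finset.mul_sum, ← Finset.mul_sum, hmu0, hmu k, mul_zero, mul_zero, sub_zero]
    · simp only [Sum.inr.injEq, reduceCtorEq, if_false]
      rw [Finset.sum_comm]
      rw [Fintype.sum_eq_single j₀ (fun b hb => Finset.sum_eq_zero (fun u _ => by
        simp [Ne.symm hb]))]
      simp only [if_true, if_pos rfl]
      have hre : ∀ u : Fin 5, lam u * mu j₀ * (2 * (p (Sum.inr j₀) k - p (Sum.inl u) k)) =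
          (mu j₀ * (2 * p (Sum.inr j₀) k)) * lam u -
            (mu j₀ * 2) * (lam u * p (Sum.inl u) k) := fun u => by ring
      rw [Finset.sum_congr rfl (fun u _ => hre u), Finset.sum_sub_distrib,
        ← Finset.mul_sum, ← Finset.mul_sum, hlam0, hlam k, mul_zero, mul_zero, sub_zero]
  have hne : ω₀ ≠ 0 := by
    intro h0
    have := hω₀apply i0 j0
    rw [h0] at this
    exact hi0 (by
      have := this.symm
      simp only [Pi.zero_apply] at this
      rcases mul_eq_zero.mp this with h1 | h1
      · exact h1
      · exact absurd h1 hj0)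
  have hfr : Module.finrank ℂ (Submodule.span ℂ {ω₀}) = 1 := finrank_span_singleton hne
  have heq : Submodule.span ℂ {ω₀} = stressSpace K55 p := by
    apply Submodule.eq_of_le_of_finrank_le
      ((Submodule.span_singleton_le_iff_mem _ _).2 hmem)
    rw [hdim, hfr]
  intro ω hω
  rw [← heq, Submodule.mem_span_singleton] at hω
  obtain ⟨c, rfl⟩ := hω
  show ∑ e : K55.edgeSet, (c • ω₀) e = 0
  rw [← Equiv.sum_comp edgeEquiv (fun e : K55.edgeSet => (c • ω₀) e)]
  simp only [Pi.smul_apply, smul_eq_mul]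
  have : ∀ x : Fin 5 × Fin 5, c * ω₀ (edgeEquiv x) = c * (lam x.1 * mu x.2) := by
    intro x; rw [hω₀apply x.1 x.2]
  rw [Finset.sum_congr rfl (fun x _ => this x), ← Finset.mul_sum,
    Fintype.sum_prod_type]
  have : ∑ u : Fin 5, ∑ j : Fin 5, lam u * mu j = (∑ u, lam u) * (∑ j, mu j) := by
    rw [Finset.sum_mul_sum]
  rw [this, hlam0, zero_mul, mul_zero]

end
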